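/- Let X be a biquandle with operations x ▷̲ y and x ▷̄ y, let Y be an X-set (a set with a right action of the associated group G_X of X). The abelian groups C_n^{BR}(X)_Y freely generated by (n+1)-tuples (y, x_1, …, x_n) with y ∈ Y and x_i ∈ X, together with the boundary maps ∂_n(y, x_1, …, x_n) = Σ_{i=1}^{n}(−1)^i[(y, x_1, …, x_{i−1}, x_{i+1}, …, x_n) − (y ▷̲ x_i, x_1 ▷̲ x_i, …, x_{i−1} ▷̲ x_i, x_{i+1} ▷̄ x_i, …, x_n ▷̄ x_i)] for n ≥ 2 and ∂_n = 0 for n ≤ 1, form a chain complex: ∂_{n−1} ∘ ∂_n = 0. -/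

import Mathlib

/-- A biquandle: a set with two binary operations `ul` (x ▷̲ y) and `ol` (x ▷̄ y)
satisfying the biquandle axioms (B1)-(B4). -/
structure Biquandle (X : Type*) where
  ul : X → X → X
  ol : X → X → X
  b1 : ∀ x, ul x x = ol x x
  b2u : ∀ y, Function.Bijective fun x => ul x y
  b2o : ∀ y, Function.Bijective fun x => ol x y
  b3 : Function.Bijective (fun p : X × X => (ol p.2 p.1, ul p.1 p.2))
  b4a : ∀ x y z, ul (ul x y) (ul z y) = ul (ul x z) (ol y z)
  b4b : ∀ x y z, ol (ul x y) (ul z y) = ul (ol x z) (ol y z)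
  b4c : ∀ x y z, ol (ol x y) (ol z y) = ol (ol x z) (ul y z)

/-- The birack boundary map ∂ : C_{n+1}^{BR}(X) → C_n^{BR}(X) on the free abelian
groups on tuples, given by
∂(x_1,…,x_m) = Σ_i (-1)^i [(x_1,…,x̂_i,…,x_m) - (x_1 ▷̲ x_i,…,x_{i-1} ▷̲ x_i, x_{i+1} ▷̄ x_i,…,x_m ▷̄ x_i)],
and ∂ = 0 in degrees ≤ 1. -/
noncomputable def bqBoundary {X : Type*} (B : Biquandle X) (n : ℕ) :
    FreeAbelianGroup (Fin (n + 1) → X) →+ FreeAbelianGroup (Fin n → X) :=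
  if n = 0 then 0 else
  FreeAbelianGroup.lift fun x : Fin (n + 1) → X =>
    ∑ i : Fin (n + 1), ((-1 : ℤ) ^ ((i : ℕ) + 1)) •
      (FreeAbelianGroup.of (x ∘ i.succAbove) -
       FreeAbelianGroup.of (fun j : Fin n =>
         if ((i.succAbove j : Fin (n + 1)) : ℕ) < (i : ℕ)
           then B.ul (x (i.succAbove j)) (x i)
           else B.ol (x (i.succAbove j)) (x i)))

/-- The subgroup C_n^{BD}(X) of degenerate chains, generated by tuples with two
equal consecutive entries. -/
def degen (X : Type*) (n : ℕ) : AddSubgroup (FreeAbelianGroup (Fin n → X)) :=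
  AddSubgroup.closure {c | ∃ x : Fin n → X,
    (∃ i j : Fin n, (i : ℕ) + 1 = (j : ℕ) ∧ x i = x j) ∧ c = FreeAbelianGroup.of x}

/-- The relations a · (b ▷̄ a) = b · (a ▷̲ b) defining the associated group of a
biquandle. -/
def bqRels {X : Type*} (B : Biquandle X) : Set (FreeGroup X) :=
  {r | ∃ a b : X, r = FreeGroup.of a * FreeGroup.of (B.ol b a) *
      (FreeGroup.of b * FreeGroup.of (B.ul a b))⁻¹}

/-- The associated group G_X = ⟨a ∈ X | a·(b ▷̄ a) = b·(a ▷̲ b)⟩ of a biquandle. -/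
abbrev AssocGroup {X : Type*} (B : Biquandle X) : Type _ := PresentedGroup (bqRels B)

/-- The shadow action y ▷̲ x of a biquandle element `x` on an element `y` of an
X-set `Y` (a set with a right action of the associated group), given by the right
action of the generator corresponding to `x`. -/
noncomputable def sact {X : Type*} (B : Biquandle X) {Y : Type*}
    [MulAction (AssocGroup B)ᵐᵒᵖ Y] (y : Y) (x : X) : Y :=
  MulOpposite.op (PresentedGroup.of x : AssocGroup B) • y

/-- The shadow birack boundary map ∂ : C_{n+1}^{BR}(X)_Y → C_n^{BR}(X)_Y. -/
noncomputable def sBoundary {X : Type*} (B : Biquandle X) (Y : Type*)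
    [MulAction (AssocGroup B)ᵐᵒᵖ Y] (n : ℕ) :
    FreeAbelianGroup (Y × (Fin (n + 1) → X)) →+ FreeAbelianGroup (Y × (Fin n → X)) :=
  if n = 0 then 0 else
  FreeAbelianGroup.lift fun yx : Y × (Fin (n + 1) → X) =>
    ∑ i : Fin (n + 1), ((-1 : ℤ) ^ ((i : ℕ) + 1)) •
      (FreeAbelianGroup.of (yx.1, yx.2 ∘ i.succAbove) -
       FreeAbelianGroup.of (sact B yx.1 (yx.2 i), fun j : Fin n =>
         if ((i.succAbove j : Fin (n + 1)) : ℕ) < (i : ℕ)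
           then B.ul (yx.2 (i.succAbove j)) (yx.2 i)
           else B.ol (yx.2 (i.succAbove j)) (yx.2 i)))

/-- The subgroup C_n^{BD}(X)_Y of degenerate shadow chains, generated by tuples
(y, x_1, …, x_n) with x_i = x_{i+1} for some i. -/
def sDegen (X Y : Type*) (n : ℕ) : AddSubgroup (FreeAbelianGroup (Y × (Fin n → X))) :=
  AddSubgroup.closure {c | ∃ (y : Y) (x : Fin n → X),
    (∃ i j : Fin n, (i : ℕ) + 1 = (j : ℕ) ∧ x i = x j) ∧ c = FreeAbelianGroup.of (y, x)}
namespace SBAux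

variable {X : Type*} (B : Biquandle X) {Y : Type*} [MulAction (AssocGroup B)ᵐᵒᵖ Y]

/-- Untwisted face map. -/
def Fc {n : ℕ} (i : Fin (n+1)) (p : Y × (Fin (n+1) → X)) : Y × (Fin n → X) :=
  (p.1, p.2 ∘ i.succAbove)

/-- Twisted face map. -/
noncomputable def Tc {n : ℕ} (i : Fin (n+1)) (p : Y × (Fin (n+1) → X)) : Y × (Fin n → X) :=
  (sact B p.1 (p.2 i), fun j : Fin n =>
    if ((i.succAbove j : Fin (n+1)) : ℕ) < (i : ℕ)
      then B.ul (p.2 (i.succAbove j)) (p.2 i)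
      else B.ol (p.2 (i.succAbove j)) (p.2 i))

lemma succAbove_val {m : ℕ} (i : Fin (m+1)) (k : Fin m) :
    ((i.succAbove k : Fin (m+1)) : ℕ) = if (k:ℕ) < (i:ℕ) then (k:ℕ) else (k:ℕ)+1 := by
  rcases lt_or_ge ((k:ℕ)) ((i:ℕ)) with h | h
  · rw [if_pos h, Fin.succAbove_of_castSucc_lt _ _ (by rwa [Fin.lt_def]), Fin.coe_castSucc]
  · rw [if_neg (not_lt.2 h), Fin.succAbove_of_le_castSucc _ _ (by rwa [Fin.le_def]), Fin.val_succ]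

lemma sBoundary_eq (n : ℕ) (hn : n ≠ 0) :
    sBoundary B Y n = FreeAbelianGroup.lift (fun p : Y × (Fin (n+1) → X) =>
      ∑ i : Fin (n+1), ((-1 : ℤ) ^ ((i : ℕ) + 1)) •
        (FreeAbelianGroup.of (Fc i p) - FreeAbelianGroup.of (Tc B i p))) := by
  unfold sBoundary
  rw [if_neg hn]
  rfl

lemma sact_mul (y : Y) (a c : X) :
    sact B (sact B y a) c
      = MulOpposite.op ((PresentedGroup.of a : AssocGroup B) * PresentedGroup.of c) • y := by
  rw [MulOpposite.op_mul, mul_smul]; rfl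

lemma assoc_rel (a b : X) :
    (PresentedGroup.of a : AssocGroup B) * PresentedGroup.of (B.ol b a)
      = PresentedGroup.of b * PresentedGroup.of (B.ul a b) := by
  have h : (FreeGroup.of a * FreeGroup.of (B.ol b a)) *
      (FreeGroup.of b * FreeGroup.of (B.ul a b))⁻¹ ∈
        Subgroup.normalClosure (bqRels B) :=
    Subgroup.subset_normalClosure ⟨a, b, rfl⟩
  have h1 : (QuotientGroup.mk (FreeGroup.of a * FreeGroup.of (B.ol b a) *
      (FreeGroup.of b * FreeGroup.of (B.ul a b))⁻¹) : AssocGroup B) = 1 :=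
    (QuotientGroup.eq_one_iff _).2 h
  rw [QuotientGroup.mk_mul, QuotientGroup.mk_inv, mul_inv_eq_one] at h1
  exact h1

lemma sact_sact (y : Y) (a b : X) :
    sact B (sact B y a) (B.ol b a) = sact B (sact B y b) (B.ul a b) := by
  rw [sact_mul, sact_mul, assoc_rel]

end SBAux
namespace SBAux

section Comb
variable {n : ℕ} (i i' : Fin (n+2)) (j j' : Fin (n+1))
  (hji : (j:ℕ) < (i:ℕ)) (hi' : (i':ℕ) = (j:ℕ)) (hj' : (j':ℕ) + 1 = (i:ℕ))

include hji hi' hj'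

lemma idx_eq (k : Fin n) :
    i.succAbove (j.succAbove k) = i'.succAbove (j'.succAbove k) := by
  apply Fin.ext
  simp only [succAbove_val]
  split_ifs <;> omega

lemma piv_eq : i'.succAbove j' = i := by
  apply Fin.ext; simp only [succAbove_val]; split_ifs <;> omega

lemma piv2_eq : i.succAbove j = i' := by
  apply Fin.ext; simp only [succAbove_val]; split_ifs <;> omega

lemma cond1 (k : Fin n) :
    (((i.succAbove (j.succAbove k) : Fin (n+2)) : ℕ) < (i:ℕ)) ↔
      (((j'.succAbove k : Fin (n+1)) : ℕ) < (j':ℕ)) := by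
  simp only [succAbove_val]; split_ifs <;> omega

lemma cond2 (k : Fin n) :
    (((j.succAbove k : Fin (n+1)) : ℕ) < (j:ℕ)) ↔
      (((i'.succAbove (j'.succAbove k) : Fin (n+2)) : ℕ) < (i':ℕ)) := by
  simp only [succAbove_val]; split_ifs <;> omega

lemma piv2_lt : ((i.succAbove j : Fin (n+2)) : ℕ) < (i:ℕ) := by
  simp only [succAbove_val]; split_ifs <;> omega

lemma piv_not_lt : ¬ ((i'.succAbove j' : Fin (n+2)) : ℕ) < (i':ℕ) := by
  simp only [succAbove_val]; split_ifs <;> omega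

end Comb
end SBAux
namespace SBAux

section Faces
variable {X : Type*} (B : Biquandle X) {Y : Type*} [MulAction (AssocGroup B)ᵐᵒᵖ Y]
  {n : ℕ} (i i' : Fin (n+2)) (j j' : Fin (n+1))
  (hji : (j:ℕ) < (i:ℕ)) (hi' : (i':ℕ) = (j:ℕ)) (hj' : (j':ℕ) + 1 = (i:ℕ))
  (p : Y × (Fin (n+2) → X))

include hji hi' hj'

lemma FF_eq : Fc j (Fc i p) = Fc j' (Fc i' p) := by
  refine Prod.ext rfl ?_
  funext k
  simp only [Fc, Function.comp_apply]
  exact congrArg p.2 (idx_eq i i' j j' hji hi' hj' k)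

lemma FT_eq : Fc j (Tc B i p) = Tc B j' (Fc i' p) := by
  refine Prod.ext ?_ ?_
  · show (Tc B i p).1 = sact B p.1 ((Fc i' p).2 j')
    simp only [Tc, Fc, Function.comp_apply]
    rw [piv_eq i i' j j' hji hi' hj']
  · funext k
    simp only [Tc, Fc, Function.comp_apply]
    by_cases hB : ((i.succAbove (j.succAbove k) : Fin (n+2)) : ℕ) < (i:ℕ)
    · rw [if_pos hB, if_pos ((cond1 i i' j j' hji hi' hj' k).1 hB),
        idx_eq i i' j j' hji hi' hj' k, piv_eq i i' j j' hji hi' hj']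
    · rw [if_neg hB, if_neg (fun hc => hB ((cond1 i i' j j' hji hi' hj' k).2 hc)),
        idx_eq i i' j j' hji hi' hj' k, piv_eq i i' j j' hji hi' hj']

lemma TF_eq : Tc B j (Fc i p) = Fc j' (Tc B i' p) := by
  refine Prod.ext ?_ ?_
  · show sact B p.1 ((Fc i p).2 j) = (Tc B i' p).1
    simp only [Tc, Fc, Function.comp_apply]
    rw [piv2_eq i i' j j' hji hi' hj']
  · funext k
    simp only [Tc, Fc, Function.comp_apply]
    by_cases hA : ((j.succAbove k : Fin (n+1)) : ℕ) < (j:ℕ)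
    · rw [if_pos hA, if_pos ((cond2 i i' j j' hji hi' hj' k).1 hA),
        idx_eq i i' j j' hji hi' hj' k, piv2_eq i i' j j' hji hi' hj']
    · rw [if_neg hA, if_neg (fun hc => hA ((cond2 i i' j j' hji hi' hj' k).2 hc)),
        idx_eq i i' j j' hji hi' hj' k, piv2_eq i i' j j' hji hi' hj']

lemma pivL : (Tc B i p).2 j = B.ul (p.2 i') (p.2 i) := by
  simp only [Tc]
  rw [if_pos (piv2_lt i i' j j' hji hi' hj'), piv2_eq i i' j j' hji hi' hj']

lemma pivR : (Tc B i' p).2 j' = B.ol (p.2 i) (p.2 i') := by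
  simp only [Tc]
  rw [if_neg (piv_not_lt i i' j j' hji hi' hj'), piv_eq i i' j j' hji hi' hj']

lemma TT_eq : Tc B j (Tc B i p) = Tc B j' (Tc B i' p) := by
  refine Prod.ext ?_ ?_
  · show sact B (Tc B i p).1 ((Tc B i p).2 j) = sact B (Tc B i' p).1 ((Tc B i' p).2 j')
    rw [pivL B i i' j j' hji hi' hj', pivR B i i' j j' hji hi' hj']
    show sact B (sact B p.1 (p.2 i)) _ = sact B (sact B p.1 (p.2 i')) _
    exact (sact_sact B p.1 (p.2 i') (p.2 i)).symm
  · funext k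
    show (if ((j.succAbove k : Fin (n+1)) : ℕ) < (j:ℕ)
        then B.ul ((Tc B i p).2 (j.succAbove k)) ((Tc B i p).2 j)
        else B.ol ((Tc B i p).2 (j.succAbove k)) ((Tc B i p).2 j))
      = (if ((j'.succAbove k : Fin (n+1)) : ℕ) < (j':ℕ)
        then B.ul ((Tc B i' p).2 (j'.succAbove k)) ((Tc B i' p).2 j')
        else B.ol ((Tc B i' p).2 (j'.succAbove k)) ((Tc B i' p).2 j'))
    rw [pivL B i i' j j' hji hi' hj', pivR B i i' j j' hji hi' hj']
    by_cases hA : ((j.succAbove k : Fin (n+1)) : ℕ) < (j:ℕ)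
    · -- then also hB
      have hB : ((i.succAbove (j.succAbove k) : Fin (n+2)) : ℕ) < (i:ℕ) := by
        revert hA; simp only [succAbove_val]; split_ifs <;> omega
      have hA' : ((j'.succAbove k : Fin (n+1)) : ℕ) < (j':ℕ) :=
        (cond1 i i' j j' hji hi' hj' k).1 hB
      have hB' : ((i'.succAbove (j'.succAbove k) : Fin (n+2)) : ℕ) < (i':ℕ) :=
        (cond2 i i' j j' hji hi' hj' k).1 hA
      rw [if_pos hA, if_pos hA']
      simp only [Tc]
      rw [if_pos hB, if_pos hB', idx_eq i i' j j' hji hi' hj' k]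
      exact B.b4a _ _ _
    · by_cases hB : ((i.succAbove (j.succAbove k) : Fin (n+2)) : ℕ) < (i:ℕ)
      · have hA' : ((j'.succAbove k : Fin (n+1)) : ℕ) < (j':ℕ) :=
          (cond1 i i' j j' hji hi' hj' k).1 hB
        have hB' : ¬ ((i'.succAbove (j'.succAbove k) : Fin (n+2)) : ℕ) < (i':ℕ) :=
          fun hc => hA ((cond2 i i' j j' hji hi' hj' k).2 hc)
        rw [if_neg hA, if_pos hA']
        simp only [Tc]
        rw [if_pos hB, if_neg hB', idx_eq i i' j j' hji hi' hj' k]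
        exact B.b4b _ _ _
      · have hA' : ¬ ((j'.succAbove k : Fin (n+1)) : ℕ) < (j':ℕ) :=
          fun hc => hB ((cond1 i i' j j' hji hi' hj' k).2 hc)
        have hB' : ¬ ((i'.succAbove (j'.succAbove k) : Fin (n+2)) : ℕ) < (i':ℕ) :=
          fun hc => hA ((cond2 i i' j j' hji hi' hj' k).2 hc)
        rw [if_neg hA, if_neg hA']
        simp only [Tc]
        rw [if_neg hB, if_neg hB', idx_eq i i' j j' hji hi' hj' k]
        exact (B.b4c _ _ _).symm

lemma GG_eq :
    (FreeAbelianGroup.of (Fc j (Fc i p)) - FreeAbelianGroup.of (Tc B j (Fc i p))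
      - (FreeAbelianGroup.of (Fc j (Tc B i p)) - FreeAbelianGroup.of (Tc B j (Tc B i p))))
    = (FreeAbelianGroup.of (Fc j' (Fc i' p)) - FreeAbelianGroup.of (Tc B j' (Fc i' p))
      - (FreeAbelianGroup.of (Fc j' (Tc B i' p)) - FreeAbelianGroup.of (Tc B j' (Tc B i' p)))) := by
  rw [FF_eq i i' j j' hji hi' hj' p, FT_eq B i i' j j' hji hi' hj' p,
    TF_eq B i i' j j' hji hi' hj' p, TT_eq B i i' j j' hji hi' hj' p]
  abel

end Faces
end SBAux
namespace SBAux

def swapIdx {n : ℕ} (q : Fin (n+2) × Fin (n+1)) : Fin (n+2) × Fin (n+1) :=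
  if h : (q.2:ℕ) < (q.1:ℕ) then
    (⟨(q.2:ℕ), by have := q.2.isLt; omega⟩, ⟨(q.1:ℕ)-1, by have := q.1.isLt; omega⟩)
  else
    (⟨(q.2:ℕ)+1, by have := q.2.isLt; omega⟩, ⟨(q.1:ℕ), by have := q.2.isLt; omega⟩)

lemma swapIdx_pos {n : ℕ} (a : Fin (n+2)) (a' : Fin (n+2)) (b : Fin (n+1)) (b' : Fin (n+1))
    (h : (b:ℕ) < (a:ℕ)) (h1 : (a':ℕ) = (b:ℕ)) (h2 : (b':ℕ) = (a:ℕ)-1) :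
    swapIdx (a, b) = (a', b') := by
  have he : swapIdx (a, b) = _ := dif_pos h
  rw [he]
  exact Prod.ext (Fin.ext (show (a':ℕ) = (b:ℕ) from h1).symm)
    (Fin.ext (show (b':ℕ) = (a:ℕ)-1 from h2).symm)

lemma swapIdx_neg {n : ℕ} (a : Fin (n+2)) (a' : Fin (n+2)) (b : Fin (n+1)) (b' : Fin (n+1))
    (h : ¬ (b:ℕ) < (a:ℕ)) (h1 : (a':ℕ) = (b:ℕ)+1) (h2 : (b':ℕ) = (a:ℕ)) :
    swapIdx (a, b) = (a', b') := by
  have he : swapIdx (a, b) = _ := dif_neg h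
  rw [he]
  exact Prod.ext (Fin.ext (show (a':ℕ) = (b:ℕ)+1 from h1).symm)
    (Fin.ext (show (b':ℕ) = (a:ℕ) from h2).symm)

lemma swapIdx_invol {n : ℕ} (q : Fin (n+2) × Fin (n+1)) : swapIdx (swapIdx q) = q := by
  obtain ⟨i, j⟩ := q
  by_cases h : (j:ℕ) < (i:ℕ)
  · rw [swapIdx_pos i ⟨(j:ℕ), by have := j.isLt; omega⟩ j ⟨(i:ℕ)-1, by have := i.isLt; omega⟩
      h rfl rfl]
    exact swapIdx_neg _ i _ j (show ¬ ((i:ℕ)-1 < (j:ℕ)) by omega)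
      (show (i:ℕ) = (i:ℕ)-1+1 by omega) rfl
  · rw [swapIdx_neg i ⟨(j:ℕ)+1, by have := j.isLt; omega⟩ j ⟨(i:ℕ), by have := j.isLt; omega⟩
      h rfl rfl]
    exact swapIdx_pos _ i _ j (show (i:ℕ) < (j:ℕ)+1 by omega) rfl
      (show (j:ℕ) = (j:ℕ)+1-1 by omega)

lemma swapIdx_ne {n : ℕ} (q : Fin (n+2) × Fin (n+1)) : swapIdx q ≠ q := by
  obtain ⟨i, j⟩ := q
  by_cases h : (j:ℕ) < (i:ℕ)
  · rw [swapIdx_pos i ⟨(j:ℕ), by have := j.isLt; omega⟩ j ⟨(i:ℕ)-1, by have := i.isLt; omega⟩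
      h rfl rfl]
    intro hEq
    have : (j:ℕ) = (i:ℕ) := congrArg (fun r => ((r.1 : Fin (n+2)) : ℕ)) hEq
    omega
  · rw [swapIdx_neg i ⟨(j:ℕ)+1, by have := j.isLt; omega⟩ j ⟨(i:ℕ), by have := j.isLt; omega⟩
      h rfl rfl]
    intro hEq
    have : (j:ℕ)+1 = (i:ℕ) := congrArg (fun r => ((r.1 : Fin (n+2)) : ℕ)) hEq
    omega

end SBAux

open SBAux

/-- The shadow birack chain groups with the stated boundary maps form a chain
complex: ∂ ∘ ∂ = 0. -/
theorem sBoundary_comp_sBoundary {X : Type*} (B : Biquandle X) (Y : Type*)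
    [Nonempty Y] [MulAction (AssocGroup B)ᵐᵒᵖ Y] :
    ∀ n : ℕ, (sBoundary B Y n).comp (sBoundary B Y (n + 1)) = 0 := by
  intro n
  rcases Nat.eq_zero_or_pos n with rfl | hn
  · have h0 : sBoundary B Y 0 = 0 := by unfold sBoundary; rw [if_pos rfl]
    rw [h0, AddMonoidHom.zero_comp]
  · have hn' : n ≠ 0 := hn.ne'
    ext p
    rw [AddMonoidHom.comp_apply, AddMonoidHom.zero_apply,
      sBoundary_eq B (n+1) (by omega), FreeAbelianGroup.lift_apply_of, map_sum]
    simp only [map_zsmul, map_sub, sBoundary_eq B n hn', FreeAbelianGroup.lift_apply_of]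
    have step : ∀ i : Fin (n+2),
        ((-1:ℤ)^((i:ℕ)+1)) •
          ((∑ j : Fin (n+1), ((-1:ℤ)^((j:ℕ)+1)) •
              (FreeAbelianGroup.of (Fc j (Fc i p)) - FreeAbelianGroup.of (Tc B j (Fc i p))))
            - ∑ j : Fin (n+1), ((-1:ℤ)^((j:ℕ)+1)) •
              (FreeAbelianGroup.of (Fc j (Tc B i p)) - FreeAbelianGroup.of (Tc B j (Tc B i p))))
        = ∑ j : Fin (n+1), ((-1:ℤ)^(((i:ℕ)+1)+((j:ℕ)+1))) •
            (FreeAbelianGroup.of (Fc j (Fc i p)) - FreeAbelianGroup.of (Tc B j (Fc i p))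
              - (FreeAbelianGroup.of (Fc j (Tc B i p)) - FreeAbelianGroup.of (Tc B j (Tc B i p)))) := by
      intro i
      rw [← Finset.sum_sub_distrib, Finset.smul_sum]
      refine Finset.sum_congr rfl fun j _ => ?_
      rw [← smul_sub, smul_smul, ← pow_add]
    rw [Finset.sum_congr rfl fun i _ => step i, ← Finset.sum_product']
    refine Finset.sum_involution (fun q _ => swapIdx q) ?_
      (fun q _ _ => swapIdx_ne q) (fun q _ => Finset.mem_univ _)
      (fun q _ => swapIdx_invol q)
    rintro ⟨i, j⟩ -
    by_cases h : (j:ℕ) < (i:ℕ)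
    · simp only [swapIdx, dif_pos h]
      rw [GG_eq B i ⟨(j:ℕ), by have := j.isLt; omega⟩ j ⟨(i:ℕ)-1, by have := i.isLt; omega⟩
        h rfl (show (i:ℕ)-1+1 = (i:ℕ) by omega) p]
      rw [← add_smul]
      convert zero_smul ℤ _
      rw [show (i:ℕ) + 1 + ((j:ℕ) + 1) = ((j:ℕ) + 1 + ((i:ℕ) - 1 + 1)) + 1 from by omega,
        pow_succ, mul_neg_one, neg_add_cancel]
    · simp only [swapIdx, dif_neg h]
      rw [GG_eq B ⟨(j:ℕ)+1, by have := j.isLt; omega⟩ i ⟨(i:ℕ), by have := j.isLt; omega⟩ j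
        (show (i:ℕ) < (j:ℕ)+1 by omega) rfl rfl p]
      rw [← add_smul]
      convert zero_smul ℤ _
      rw [show (j:ℕ) + 1 + 1 + ((i:ℕ) + 1) = ((i:ℕ) + 1 + ((j:ℕ) + 1)) + 1 from by omega,
        pow_succ, mul_neg_one, add_neg_cancel]
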